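/- Let (X_i, Y_i), i ∈ [k], be i.i.d. pairs of finite discrete random variables and let M be any random variable that is a deterministic function of X^k = (X_1,...,X_k). Then I(X^k; M | Y^k) = Σ_{i=1}^k I(X_i; (M, X^{i−1}, Y^{[k]∖{i}}) | Y_i). -/

import Mathlib

open scoped BigOperators

namespace Caching

/-- A finitely supported probability mass function on the sample space `Ω`. -/
structure FinPMF (Ω : Type*) [Fintype Ω] where
  p : Ω → ℝ
  nonneg : ∀ ω, 0 ≤ p ω
  sum_one : ∑ ω, p ω = 1

variable {Ω : Type*} [Fintype Ω]

/-- The probability that the random variable `X` takes the value `x`. -/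
def prob {α : Type*} [DecidableEq α] (μ : FinPMF Ω) (X : Ω → α) (x : α) : ℝ :=
  ∑ ω, if X ω = x then μ.p ω else 0

/-- Shannon entropy (in bits) of a finite discrete random variable. -/
noncomputable def H {α : Type*} [Fintype α] [DecidableEq α] (μ : FinPMF Ω) (X : Ω → α) : ℝ :=
  -∑ x, prob μ X x * Real.logb 2 (prob μ X x)

/-- Conditional entropy `H(X | Y)` (in bits). -/
noncomputable def condH {α β : Type*} [Fintype α] [DecidableEq α] [Fintype β] [DecidableEq β]
    (μ : FinPMF Ω) (X : Ω → α) (Y : Ω → β) : ℝ :=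
  H μ (fun ω => (X ω, Y ω)) - H μ Y

/-- Mutual information `I(X; Y)` (in bits). -/
noncomputable def mutInfo {α β : Type*} [Fintype α] [DecidableEq α] [Fintype β] [DecidableEq β]
    (μ : FinPMF Ω) (X : Ω → α) (Y : Ω → β) : ℝ :=
  H μ X + H μ Y - H μ (fun ω => (X ω, Y ω))

/-- Conditional mutual information `I(X; Y | Z)` (in bits). -/
noncomputable def condMutInfo {α β γ : Type*} [Fintype α] [DecidableEq α] [Fintype β]
    [DecidableEq β] [Fintype γ] [DecidableEq γ]
    (μ : FinPMF Ω) (X : Ω → α) (Y : Ω → β) (Z : Ω → γ) : ℝ :=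
  condH μ X Z + condH μ Y Z - condH μ (fun ω => (X ω, Y ω)) Z

/-- `X` and `Y` are independent. -/
def Indep {α β : Type*} [DecidableEq α] [DecidableEq β]
    (μ : FinPMF Ω) (X : Ω → α) (Y : Ω → β) : Prop :=
  ∀ x y, prob μ (fun ω => (X ω, Y ω)) (x, y) = prob μ X x * prob μ Y y

/-- `V — X — Y` form a Markov chain: `V` and `Y` are conditionally independent given `X`. -/
def MarkovChain {α β γ : Type*} [DecidableEq α] [DecidableEq β] [DecidableEq γ]
    (μ : FinPMF Ω) (V : Ω → γ) (X : Ω → α) (Y : Ω → β) : Prop :=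
  ∀ v x y, prob μ (fun ω => (V ω, X ω, Y ω)) (v, x, y) * prob μ X x
    = prob μ (fun ω => (V ω, X ω)) (v, x) * prob μ (fun ω => (X ω, Y ω)) (x, y)

/- ### Auxiliary lemmas -/

lemma sum_prob {α : Type*} [Fintype α] [DecidableEq α] (μ : FinPMF Ω) (X : Ω → α) :
    ∑ x, prob μ X x = 1 := by
  unfold prob
  rw [Finset.sum_comm]
  simp [μ.sum_one]

lemma prob_comp {α β : Type*} [DecidableEq α] [DecidableEq β]
    (μ : FinPMF Ω) (T : Ω → α) (e : α → β) (he : Function.Injective e) (t : α) :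
    prob μ (fun ω => e (T ω)) (e t) = prob μ T t := by
  unfold prob
  congr 1; funext ω; simp [he.eq_iff]

lemma prob_comp_zero {α β : Type*} [DecidableEq β]
    (μ : FinPMF Ω) (T : Ω → α) (e : α → β) (b : β) (hb : ∀ t, e t ≠ b) :
    prob μ (fun ω => e (T ω)) b = 0 :=
  Finset.sum_eq_zero fun ω _ => by simp [hb (T ω)]

lemma H_comp {α β : Type*} [Fintype α] [DecidableEq α] [Fintype β] [DecidableEq β]
    (μ : FinPMF Ω) (T : Ω → α) (e : α → β) (he : Function.Injective e) :
    H μ (fun ω => e (T ω)) = H μ T := by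
  unfold H
  congr 1
  rw [← Finset.sum_subset (Finset.subset_univ (Finset.image e Finset.univ))]
  · rw [Finset.sum_image (fun a _ b _ h => he h)]
    exact Finset.sum_congr rfl fun t _ => by rw [prob_comp μ T e he]
  · intro b _ hb
    have : ∀ t, e t ≠ b := by
      intro t h; exact hb (Finset.mem_image.2 ⟨t, Finset.mem_univ t, h⟩)
    rw [prob_comp_zero μ T e b this]
    simp

lemma H_eq_of_mutual {α' β' : Type*} [Fintype α'] [DecidableEq α'] [Fintype β'] [DecidableEq β']
    (μ : FinPMF Ω) (A : Ω → α') (B : Ω → β') (f : β' → α') (h : α' → β')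
    (hA : ∀ ω, A ω = f (B ω)) (hB : ∀ ω, B ω = h (A ω)) : H μ A = H μ B := by
  have e1inj : Function.Injective (fun a : α' => (a, h a)) := fun a a' hh => congrArg Prod.fst hh
  have e2inj : Function.Injective (fun b : β' => (f b, b)) := fun b b' hh => congrArg Prod.snd hh
  have h1 : H μ (fun ω => (A ω, B ω)) = H μ A := by
    have heq : (fun ω => (A ω, B ω)) = fun ω => (fun a : α' => (a, h a)) (A ω) := by
      funext ω; show _ = (A ω, h (A ω)); rw [← hB ω]
    rw [heq]
    have hc := H_comp μ A (fun a : α' => (a, h a)) e1inj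
    exact hc
  have h2 : H μ (fun ω => (A ω, B ω)) = H μ B := by
    have heq : (fun ω => (A ω, B ω)) = fun ω => (fun b : β' => (f b, b)) (B ω) := by
      funext ω; show _ = (f (B ω), B ω); rw [← hA ω]
    rw [heq]
    have hc := H_comp μ B (fun b : β' => (f b, b)) e2inj
    exact hc
  rw [← h1, h2]

lemma prob_snd {α β : Type*} [Fintype α] [DecidableEq α] [DecidableEq β]
    (μ : FinPMF Ω) (A : Ω → α) (B : Ω → β) (b : β) :
    prob μ B b = ∑ a, prob μ (fun ω => (A ω, B ω)) (a, b) := by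
  unfold prob
  rw [Finset.sum_comm]
  refine Finset.sum_congr rfl fun ω _ => ?_
  by_cases h : B ω = b <;> simp [Prod.ext_iff, h, Finset.sum_ite_eq]

lemma H_pi {ι ζ : Type*} [Fintype ι] [DecidableEq ι] [Fintype ζ] [DecidableEq ζ]
    (μ : FinPMF Ω) (W : Ω → ι → ζ)
    (h : ∀ w, prob μ W w = ∏ i, prob μ (fun ω => W ω i) (w i)) :
    H μ W = ∑ i, H μ (fun ω => W ω i) := by
  set p : ι → ζ → ℝ := fun i z => prob μ (fun ω => W ω i) z with hp
  unfold H
  simp only [h, ← hp]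
  rw [show (∑ i : ι, -∑ z, p i z * Real.logb 2 (p i z))
      = -∑ i : ι, ∑ z, p i z * Real.logb 2 (p i z) from Finset.sum_neg_distrib _, neg_inj]
  have step1 : ∀ w : ι → ζ, (∏ i, p i (w i)) * Real.logb 2 (∏ i, p i (w i))
      = ∑ i, (∏ j, p j (w j)) * Real.logb 2 (p i (w i)) := by
    intro w
    by_cases hz : ∃ i, p i (w i) = 0
    · obtain ⟨i0, hi0⟩ := hz
      have : ∏ i, p i (w i) = 0 := Finset.prod_eq_zero (Finset.mem_univ i0) hi0
      simp [this]
    · push_neg at hz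
      rw [Real.logb_prod _ _ (fun i _ => hz i), Finset.mul_sum]
  calc ∑ w : ι → ζ, (∏ i, p i (w i)) * Real.logb 2 (∏ i, p i (w i))
      = ∑ w : ι → ζ, ∑ i, (∏ j, p j (w j)) * Real.logb 2 (p i (w i)) :=
        Finset.sum_congr rfl fun w _ => step1 w
    _ = ∑ i, ∑ w : ι → ζ, (∏ j, p j (w j)) * Real.logb 2 (p i (w i)) := Finset.sum_comm
    _ = ∑ i, ∑ z, p i z * Real.logb 2 (p i z) := by
        refine Finset.sum_congr rfl fun i _ => ?_
        set f : ι → ζ → ℝ := fun j z => if j = i then p j z * Real.logb 2 (p j z) else p j z with hf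
        have key : ∀ w : ι → ζ, (∏ j, p j (w j)) * Real.logb 2 (p i (w i))
            = ∏ j, f j (w j) := by
          intro w
          have h1 : ∏ j ∈ Finset.univ.erase i, f j (w j)
              = ∏ j ∈ Finset.univ.erase i, p j (w j) :=
            Finset.prod_congr rfl fun j hj => by
              simp [hf, (Finset.mem_erase.1 hj).1]
          rw [← Finset.mul_prod_erase _ (fun j => p j (w j)) (Finset.mem_univ i),
              ← Finset.mul_prod_erase _ (fun j => f j (w j)) (Finset.mem_univ i), h1]
          simp only [hf, if_pos rfl]
          ring
        rw [Finset.sum_congr rfl fun w _ => key w,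
            show (∑ w : ι → ζ, ∏ j, f j (w j)) = ∏ j, ∑ z, f j z from
              (Fintype.prod_sum (fun j z => f j z)).symm,
            ← Finset.mul_prod_erase _ (fun j => ∑ z, f j z) (Finset.mem_univ i)]
        have h2 : ∀ j ∈ Finset.univ.erase i, (∑ z, f j z) = 1 := by
          intro j hj
          simp only [hf, (Finset.mem_erase.1 hj).1, if_false]
          exact sum_prob μ _
        rw [Finset.prod_congr rfl h2]
        simp [hf]

set_option maxHeartbeats 3200000 in
set_option synthInstance.maxSize 2000 in
set_option synthInstance.maxHeartbeats 400000 in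
/-- Single-letterization: for i.i.d. pairs `(X_i, Y_i)` and any `M` that is a deterministic
function of `X^k`,
`I(X^k; M | Y^k) = Σ_i I(X_i; (M, X^{i−1}, Y^{[k]∖{i}}) | Y_i)`. -/
theorem single_letterization
    {Ω α β γ : Type*} [Fintype Ω] [Fintype α] [DecidableEq α] [Fintype β] [DecidableEq β]
    [Fintype γ] [DecidableEq γ] {k : ℕ}
    (μ : FinPMF Ω) (X : Fin k → Ω → α) (Y : Fin k → Ω → β) (M : Ω → γ)
    (hiid_indep : ∀ (x : Fin k → α) (y : Fin k → β),
      prob μ (fun ω => (fun i => X i ω, fun i => Y i ω)) (x, y)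
        = ∏ i, prob μ (fun ω => (X i ω, Y i ω)) (x i, y i))
    (hiid_ident : ∀ (i j : Fin k) (a : α) (b : β),
      prob μ (fun ω => (X i ω, Y i ω)) (a, b) = prob μ (fun ω => (X j ω, Y j ω)) (a, b))
    (hM : ∃ g : (Fin k → α) → γ, ∀ ω, M ω = g (fun i => X i ω)) :
    condMutInfo μ (fun ω => fun i => X i ω) M (fun ω => fun i => Y i ω)
      = ∑ i : Fin k,
          condMutInfo μ (X i)
            (fun ω => (M ω,
              fun j : Fin i.val => X ⟨j.val, Nat.lt_of_lt_of_le j.isLt (Nat.le_of_lt i.isLt)⟩ ω,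
              fun j : {j : Fin k // j ≠ i} => Y j.val ω))
            (Y i) := by
  obtain ⟨g, hg⟩ := hM
  have hΩne : Nonempty Ω := by
    by_contra hc
    rw [not_nonempty_iff] at hc
    have h1 := μ.sum_one
    rw [Finset.univ_eq_empty, Finset.sum_empty] at h1
    exact absurd h1 (by norm_num)
  obtain ⟨ω0⟩ := hΩne
  -- the truncated-history entropies
  set E : ℕ → ℝ := fun n => H μ (fun ω => (M ω,
      fun j : Fin k => if (j : ℕ) < n then some (X j ω) else (none : Option α),
      fun j : Fin k => Y j ω)) with hE
  -- E 0 = H(M, Y^k)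
  have hE0 : E 0 = H μ (fun ω => (M ω, fun i : Fin k => Y i ω)) := by
    refine H_eq_of_mutual μ _ _
      (fun q : γ × (Fin k → β) => (q.1, fun _ : Fin k => (none : Option α), q.2))
      (fun q : γ × (Fin k → Option α) × (Fin k → β) => (q.1, q.2.2)) ?_ ?_
    · intro ω; simp
    · intro ω; rfl
  -- E k = H(X^k, Y^k)
  have hEk : E k = H μ (fun ω => (fun i : Fin k => X i ω, fun i : Fin k => Y i ω)) := by
    refine H_eq_of_mutual μ _ _
      (fun q : (Fin k → α) × (Fin k → β) => (g q.1, fun j : Fin k => some (q.1 j), q.2))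
      (fun q : γ × (Fin k → Option α) × (Fin k → β) =>
        (fun j : Fin k => (q.2.1 j).getD (X j ω0), q.2.2)) ?_ ?_
    · intro ω
      simp only [hg]
      refine Prod.ext rfl (Prod.ext ?_ rfl)
      funext j
      simp [j.isLt]
    · intro ω
      refine Prod.ext ?_ rfl
      funext j
      simp [j.isLt]
  -- determinism: H((X^k, M), Y^k) = H(X^k, Y^k)
  have hMdet : H μ (fun ω => (((fun i : Fin k => X i ω), M ω), fun i : Fin k => Y i ω))
      = H μ (fun ω => (fun i : Fin k => X i ω, fun i : Fin k => Y i ω)) := by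
    refine H_eq_of_mutual μ _ _
      (fun q : (Fin k → α) × (Fin k → β) => ((q.1, g q.1), q.2))
      (fun q : ((Fin k → α) × γ) × (Fin k → β) => (q.1.1, q.2)) ?_ ?_
    · intro ω; simp [hg]
    · intro ω; rfl
  -- joint entropy of the iid pairs splits
  have hXY : H μ (fun ω => (fun i : Fin k => X i ω, fun i : Fin k => Y i ω))
      = ∑ i : Fin k, H μ (fun ω => (X i ω, Y i ω)) := by
    have hinj : Function.Injective
        (fun q : (Fin k → α) × (Fin k → β) => fun i : Fin k => (q.1 i, q.2 i)) := by
      intro q q' hq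
      refine Prod.ext ?_ ?_ <;> funext i
      · exact congrArg Prod.fst (congrFun hq i)
      · exact congrArg Prod.snd (congrFun hq i)
    have h1 : H μ (fun ω => (fun i : Fin k => X i ω, fun i : Fin k => Y i ω))
        = H μ (fun ω => fun i : Fin k => (X i ω, Y i ω)) :=
      (H_comp μ _ _ hinj).symm
    rw [h1]
    refine H_pi μ _ ?_
    intro w
    have hw : w = (fun q : (Fin k → α) × (Fin k → β) => fun i : Fin k => (q.1 i, q.2 i))
        (fun i => (w i).1, fun i => (w i).2) := by funext i; rfl
    rw [hw, prob_comp μ (fun ω => (fun i : Fin k => X i ω, fun i : Fin k => Y i ω)) _ hinj,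
      hiid_indep]
  -- marginal of Y^k splits
  have hYmarg : ∀ y : Fin k → β, prob μ (fun ω => fun i : Fin k => Y i ω) y
      = ∏ i, prob μ (fun ω => Y i ω) (y i) := by
    intro y
    rw [prob_snd μ (fun ω => fun i : Fin k => X i ω) (fun ω => fun i : Fin k => Y i ω) y]
    have h1 : ∀ x : Fin k → α,
        prob μ (fun ω => (fun i : Fin k => X i ω, fun i : Fin k => Y i ω)) (x, y)
          = ∏ i, prob μ (fun ω => (X i ω, Y i ω)) (x i, y i) := fun x => hiid_indep x y
    rw [Finset.sum_congr rfl fun x _ => h1 x,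
      show (∑ x : Fin k → α, ∏ i, prob μ (fun ω => (X i ω, Y i ω)) (x i, y i))
        = ∏ i, ∑ a, prob μ (fun ω => (X i ω, Y i ω)) (a, y i) from
        (Fintype.prod_sum (fun i a => prob μ (fun ω => (X i ω, Y i ω)) (a, y i))).symm]
    exact Finset.prod_congr rfl fun i _ =>
      (prob_snd μ (X i) (Y i) (y i)).symm
  have hY : H μ (fun ω => fun i : Fin k => Y i ω) = ∑ i : Fin k, H μ (fun ω => Y i ω) :=
    H_pi μ _ hYmarg
  -- per-index identities
  have hterm : ∀ i : Fin k,
      condMutInfo μ (X i)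
        (fun ω => (M ω,
          fun j : Fin i.val => X ⟨j.val, Nat.lt_of_lt_of_le j.isLt (Nat.le_of_lt i.isLt)⟩ ω,
          fun j : {j : Fin k // j ≠ i} => Y j.val ω))
        (Y i)
      = (H μ (fun ω => (X i ω, Y i ω)) - H μ (Y i)) + (E i.val - E (i.val + 1)) := by
    intro i
    have a0 : α := X i ω0
    have hVi : E i.val = H μ (fun ω =>
        ((M ω,
          fun j : Fin i.val => X ⟨j.val, Nat.lt_of_lt_of_le j.isLt (Nat.le_of_lt i.isLt)⟩ ω,
          fun j : {j : Fin k // j ≠ i} => Y j.val ω), Y i ω)) := by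
      refine H_eq_of_mutual μ _ _
        (fun q : (γ × (Fin i.val → α) × ({j : Fin k // j ≠ i} → β)) × β =>
          (q.1.1,
           fun j : Fin k => if h : (j : ℕ) < i.val then some (q.1.2.1 ⟨j.val, h⟩) else none,
           fun j : Fin k => if h : j = i then q.2 else q.1.2.2 ⟨j, h⟩))
        (fun q : γ × (Fin k → Option α) × (Fin k → β) =>
          ((q.1,
            fun j0 : Fin i.val =>
              (q.2.1 ⟨j0.val, Nat.lt_of_lt_of_le j0.isLt (Nat.le_of_lt i.isLt)⟩).getD a0,
            fun j : {j : Fin k // j ≠ i} => q.2.2 j.val), q.2.2 i)) ?_ ?_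
      · intro ω
        refine Prod.ext rfl (Prod.ext ?_ ?_)
        · funext j
          by_cases h : (j : ℕ) < i.val
          · simp only [if_pos h, dif_pos h]
          · simp only [if_neg h, dif_neg h]
        · funext j
          by_cases h : j = i
          · subst h; simp
          · simp [h]
      · intro ω
        refine Prod.ext (Prod.ext rfl (Prod.ext ?_ rfl)) rfl
        funext j0
        simp [j0.isLt]
    have hXVi : E (i.val + 1) = H μ (fun ω =>
        ((X i ω, (M ω,
          fun j : Fin i.val => X ⟨j.val, Nat.lt_of_lt_of_le j.isLt (Nat.le_of_lt i.isLt)⟩ ω,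
          fun j : {j : Fin k // j ≠ i} => Y j.val ω)), Y i ω)) := by
      refine H_eq_of_mutual μ _ _
        (fun q : (α × γ × (Fin i.val → α) × ({j : Fin k // j ≠ i} → β)) × β =>
          (q.1.2.1,
           fun j : Fin k => if h : (j : ℕ) < i.val then some (q.1.2.2.1 ⟨j.val, h⟩)
             else if j = i then some q.1.1 else none,
           fun j : Fin k => if h : j = i then q.2 else q.1.2.2.2 ⟨j, h⟩))
        (fun q : γ × (Fin k → Option α) × (Fin k → β) =>
          (((q.2.1 i).getD a0,
            (q.1,
             fun j0 : Fin i.val =>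
               (q.2.1 ⟨j0.val, Nat.lt_of_lt_of_le j0.isLt (Nat.le_of_lt i.isLt)⟩).getD a0,
             fun j : {j : Fin k // j ≠ i} => q.2.2 j.val)), q.2.2 i)) ?_ ?_
      · intro ω
        refine Prod.ext rfl (Prod.ext ?_ ?_)
        · funext j
          show (if (j : ℕ) < (i : ℕ) + 1 then some (X j ω) else (none : Option α))
            = if h : (j : ℕ) < i.val
                then some (X ⟨j.val, Nat.lt_of_lt_of_le h (Nat.le_of_lt i.isLt)⟩ ω)
                else if j = i then some (X i ω) else none
          by_cases h1 : (j : ℕ) < i.val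
          · rw [if_pos (show (j : ℕ) < (i : ℕ) + 1 from Nat.lt_succ_of_lt h1), dif_pos h1]
          · by_cases h2 : j = i
            · subst h2
              rw [if_pos (show (j : ℕ) < (j : ℕ) + 1 from Nat.lt_succ_self _),
                dif_neg h1, if_pos rfl]
            · have hne : (j : ℕ) ≠ (i : ℕ) := fun hc => h2 (Fin.ext hc)
              rw [if_neg (show ¬ ((j : ℕ) < (i : ℕ) + 1) by omega), dif_neg h1, if_neg h2]
        · funext j
          show Y j ω = if h : j = i then Y i ω else Y j ω
          by_cases h : j = i
          · subst h; simp
          · simp [h]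
      · intro ω
        refine Prod.ext (Prod.ext ?_ (Prod.ext rfl (Prod.ext ?_ rfl))) rfl
        · show X i ω
            = ((if (i : ℕ) < (i : ℕ) + 1 then some (X i ω) else (none : Option α))).getD a0
          rw [if_pos (show (i : ℕ) < (i : ℕ) + 1 from Nat.lt_succ_self _)]; rfl
        · funext j0
          show X ⟨j0.val, Nat.lt_of_lt_of_le j0.isLt (Nat.le_of_lt i.isLt)⟩ ω
            = ((if (j0 : ℕ) < (i : ℕ) + 1
                then some (X ⟨j0.val, Nat.lt_of_lt_of_le j0.isLt (Nat.le_of_lt i.isLt)⟩ ω)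
                else (none : Option α))).getD a0
          rw [if_pos (show (j0 : ℕ) < (i : ℕ) + 1 from Nat.lt_succ_of_lt j0.isLt)]; rfl
    simp only [condMutInfo, condH]
    rw [hVi, hXVi]
    ring
  -- assemble
  rw [Finset.sum_congr rfl fun i _ => hterm i]
  rw [Finset.sum_add_distrib, Finset.sum_sub_distrib]
  rw [← hXY]
  have htel : ∑ i : Fin k, (E i.val - E (i.val + 1)) = E 0 - E k := by
    rw [Fin.sum_univ_eq_sum_range (fun n => E n - E (n + 1)) k]
    exact Finset.sum_range_sub' E k
  rw [htel]
  have hconst : ∑ _i : Fin k, H μ (Y _i) = ∑ i : Fin k, H μ (fun ω => Y i ω) := rfl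
  simp only [condMutInfo, condH]
  rw [hMdet, hE0, hEk, ← hY]
  ring
end Caching
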